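/- Let I ⊆ ℝ be an interval, t0 ∈ I, F : I → ℝ^{n×n} continuous, and let P : I → S^n be differentiable with Ṗ(t) = F(t)P(t) + P(t)F(t)^T on I and P(t0) positive semidefinite. Let X : I → ℝ^{n×n} be the solution of Ẋ(t) = F(t)X(t) with X(t0) = P(t0)^{1/2} (the positive semidefinite square root). Then P(t) = X(t)X(t)^T for all t ∈ I. -/

import Mathlib

open Matrix Set

namespace Matrix.PosSemidef
noncomputable def sqrt {n 𝕜 : Type*} [Fintype n] [DecidableEq n] [RCLike 𝕜]
    [PartialOrder 𝕜] [StarOrderedRing 𝕜]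
    {A : Matrix n n 𝕜} (hA : A.PosSemidef) : Matrix n n 𝕜 :=
  hA.1.eigenvectorUnitary.1 * diagonal ((↑) ∘ Real.sqrt ∘ hA.1.eigenvalues) *
  (star hA.1.eigenvectorUnitary : Matrix n n 𝕜)
end Matrix.PosSemidef

attribute [local instance] Matrix.frobeniusNormedAddCommGroup Matrix.frobeniusNormedSpace
  Matrix.frobeniusNormedRing

private lemma hasDerivWithinAt_matrix {n : ℕ} {f : ℝ → Matrix (Fin n) (Fin n) ℝ}
    {f' : Matrix (Fin n) (Fin n) ℝ} {s : Set ℝ} {x : ℝ}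
    (h : ∀ i j, HasDerivWithinAt (fun t => f t i j) (f' i j) s x) :
    HasDerivWithinAt f f' s x := by
  have key : HasDerivWithinAt (fun t => ∑ i, ∑ j, Matrix.single i j (f t i j))
      (∑ i, ∑ j, Matrix.single i j (f' i j)) s x := by
    refine HasDerivWithinAt.fun_sum fun i _ => HasDerivWithinAt.fun_sum fun j _ => ?_
    have hsb : ∀ c : ℝ, Matrix.single i j c = c • Matrix.single i j (1 : ℝ) := by
      intro c; rw [smul_single, smul_eq_mul, mul_one]
    rw [hsb (f' i j)]
    exact ((h i j).smul_const _).congr (fun y _ => hsb _) (hsb _)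
  have hfun : ∀ t, f t = ∑ i, ∑ j, Matrix.single i j (f t i j) := fun t =>
    matrix_eq_sum_single (f t)
  rw [matrix_eq_sum_single f']
  exact key.congr (fun y _ => hfun y) (hfun x)

/-- Uniqueness for the matrix linear ODE `Ẏ = F Y + Y Fᵀ` on a compact interval,
with initial condition at any point of the interval. -/
private lemma lyapunov_unique {n : ℕ} {a b : ℝ} (hab : a ≤ b)
    (F : ℝ → Matrix (Fin n) (Fin n) ℝ) (hF : ContinuousOn F (Icc a b))
    (f g : ℝ → Matrix (Fin n) (Fin n) ℝ)
    (hf' : ∀ s ∈ Icc a b, HasDerivWithinAt f (F s * f s + f s * (F s)ᵀ) (Icc a b) s)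
    (hg' : ∀ s ∈ Icc a b, HasDerivWithinAt g (F s * g s + g s * (F s)ᵀ) (Icc a b) s)
    {t0 : ℝ} (ht0 : t0 ∈ Icc a b) (h0 : f t0 = g t0) :
    EqOn f g (Icc a b) := by
  obtain ⟨C, hC⟩ := (isCompact_Icc (a := a) (b := b)).exists_bound_of_continuousOn hF
  have hC0 : 0 ≤ C := le_trans (norm_nonneg _) (hC a ⟨le_refl a, hab⟩)
  set v : ℝ → Matrix (Fin n) (Fin n) ℝ → Matrix (Fin n) (Fin n) ℝ :=
    fun s M => F (projIcc a b hab s : ℝ) * M + M * (F (projIcc a b hab s : ℝ))ᵀ with hv_def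
  have hveq : ∀ s ∈ Icc a b, ∀ M, v s M = F s * M + M * (F s)ᵀ := by
    intro s hs M
    simp only [hv_def, coe_projIcc, min_eq_right hs.2, max_eq_right hs.1]
  have hv : ∀ s : ℝ, LipschitzOnWith (2 * C).toNNReal (v s)
      (univ : Set (Matrix (Fin n) (Fin n) ℝ)) := by
    intro s
    apply LipschitzWith.lipschitzOnWith
    apply LipschitzWith.of_dist_le_mul
    intro M N
    have hFs : ‖F (projIcc a b hab s : ℝ)‖ ≤ C := hC _ (projIcc a b hab s).2
    set A := F (projIcc a b hab s : ℝ) with hA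
    have h1 : dist (v s M) (v s N) = ‖A * (M - N) + (M - N) * Aᵀ‖ := by
      rw [dist_eq_norm]
      congr 1
      simp only [hv_def, ← hA, mul_sub, sub_mul]
      abel
    rw [h1]
    calc ‖A * (M - N) + (M - N) * Aᵀ‖ ≤ ‖A * (M - N)‖ + ‖(M - N) * Aᵀ‖ := norm_add_le _ _
      _ ≤ ‖A‖ * ‖M - N‖ + ‖M - N‖ * ‖Aᵀ‖ := add_le_add (norm_mul_le _ _) (norm_mul_le _ _)
      _ = 2 * ‖A‖ * ‖M - N‖ := by rw [Matrix.frobenius_norm_transpose]; ring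
      _ ≤ 2 * C * ‖M - N‖ := by
          apply mul_le_mul_of_nonneg_right _ (norm_nonneg _)
          nlinarith [norm_nonneg A]
      _ = ((2 * C).toNNReal : ℝ) * dist M N := by
          rw [Real.coe_toNNReal _ (by positivity), dist_eq_norm]
  have hfc : ContinuousOn f (Icc a b) := fun s hs => (hf' s hs).continuousWithinAt
  have hgc : ContinuousOn g (Icc a b) := fun s hs => (hg' s hs).continuousWithinAt
  have hIic : ∀ (h : ℝ → Matrix (Fin n) (Fin n) ℝ),
      (∀ s ∈ Icc a b, HasDerivWithinAt h (F s * h s + h s * (F s)ᵀ) (Icc a b) s) →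
      ∀ s ∈ Ioc a t0, HasDerivWithinAt h (v s (h s)) (Iic s) s := by
    intro h hh s hs
    have hs' : s ∈ Icc a b := ⟨le_of_lt hs.1, le_trans hs.2 ht0.2⟩
    rw [hveq s hs']
    exact (hh s hs').mono_of_mem_nhdsWithin
      (Filter.mem_of_superset (Icc_mem_nhdsLE_of_mem ⟨hs.1, le_refl s⟩)
        (Icc_subset_Icc le_rfl hs'.2))
  have hIci : ∀ (h : ℝ → Matrix (Fin n) (Fin n) ℝ),
      (∀ s ∈ Icc a b, HasDerivWithinAt h (F s * h s + h s * (F s)ᵀ) (Icc a b) s) →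
      ∀ s ∈ Ico t0 b, HasDerivWithinAt h (v s (h s)) (Ici s) s := by
    intro h hh s hs
    have hs' : s ∈ Icc a b := ⟨le_trans ht0.1 hs.1, le_of_lt hs.2⟩
    rw [hveq s hs']
    exact (hh s hs').mono_of_mem_nhdsWithin
      (Filter.mem_of_superset (Icc_mem_nhdsGE_of_mem ⟨le_refl s, hs.2⟩)
        (Icc_subset_Icc hs'.1 le_rfl))
  have h1 : EqOn f g (Icc a t0) :=
    ODE_solution_unique_of_mem_Icc_left (s := fun _ => univ) (fun t _ => hv t)
      (hfc.mono (Icc_subset_Icc_right ht0.2)) (hIic f hf') (fun _ _ => trivial)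
      (hgc.mono (Icc_subset_Icc_right ht0.2)) (hIic g hg') (fun _ _ => trivial) h0
  have h2 : EqOn f g (Icc t0 b) :=
    ODE_solution_unique_of_mem_Icc_right (s := fun _ => univ) (fun t _ => hv t)
      (hfc.mono (Icc_subset_Icc_left ht0.1)) (hIci f hf') (fun _ _ => trivial)
      (hgc.mono (Icc_subset_Icc_left ht0.1)) (hIci g hg') (fun _ _ => trivial) h0
  intro s hs
  rcases le_total s t0 with h | h
  · exact h1 ⟨hs.1, h⟩
  · exact h2 ⟨h, hs.2⟩

theorem sqrt_factorization_of_lyapunov_flow {n : ℕ}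
    (I : Set ℝ) (hI : I.OrdConnected) (t0 : ℝ) (ht0 : t0 ∈ I)
    (F : ℝ → Matrix (Fin n) (Fin n) ℝ) (hF : ContinuousOn F I)
    (P : ℝ → Matrix (Fin n) (Fin n) ℝ)
    (hPsymm : ∀ t ∈ I, (P t).IsSymm)
    (hPdyn : ∀ t ∈ I, ∀ i j, HasDerivWithinAt (fun s => P s i j)
      ((F t * P t + P t * (F t)ᵀ) i j) I t)
    (hP0 : (P t0).PosSemidef)
    (X : ℝ → Matrix (Fin n) (Fin n) ℝ)
    (hXdyn : ∀ t ∈ I, ∀ i j, HasDerivWithinAt (fun s => X s i j)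
      ((F t * X t) i j) I t)
    (hX0 : X t0 = hP0.sqrt) :
    ∀ t ∈ I, P t = X t * (X t)ᵀ := by
  -- initial condition
  have h0 : P t0 = X t0 * (X t0)ᵀ := by
    rw [hX0]
    have hspec := hP0.1.spectral_theorem
    rw [Unitary.conjStarAlgAut_apply] at hspec
    have hUU : (star hP0.1.eigenvectorUnitary : Matrix (Fin n) (Fin n) ℝ) * hP0.1.eigenvectorUnitary.1 = 1 :=
      Unitary.coe_star_mul_self _
    have hst : (star hP0.1.eigenvectorUnitary : Matrix (Fin n) (Fin n) ℝ) = (hP0.1.eigenvectorUnitary.1)ᵀ := by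
      rw [Matrix.star_eq_conjTranspose, conjTranspose_eq_transpose_of_trivial]
    have hD : diagonal (RCLike.ofReal ∘ Real.sqrt ∘ hP0.1.eigenvalues : Fin n → ℝ) * diagonal (RCLike.ofReal ∘ Real.sqrt ∘ hP0.1.eigenvalues : Fin n → ℝ)
        = diagonal (RCLike.ofReal ∘ hP0.1.eigenvalues : Fin n → ℝ) := by
      rw [diagonal_mul_diagonal]; congr 1; funext i
      simp [Real.mul_self_sqrt (hP0.eigenvalues_nonneg i)]
    unfold Matrix.PosSemidef.sqrt
    rw [hst] at hUU ⊢
    rw [transpose_mul, transpose_mul, transpose_transpose, diagonal_transpose]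
    conv_lhs => rw [hspec, hst]
    simp only [Matrix.mul_assoc]
    rw [← Matrix.mul_assoc (hP0.1.eigenvectorUnitary.1)ᵀ, hUU, Matrix.one_mul,
      ← Matrix.mul_assoc (diagonal _), hD]
  -- entrywise derivative of g = X Xᵀ
  have hg_entry : ∀ t ∈ I, ∀ i j, HasDerivWithinAt (fun s => (X s * (X s)ᵀ) i j)
      ((F t * (X t * (X t)ᵀ) + (X t * (X t)ᵀ) * (F t)ᵀ) i j) I t := by
    intro t ht i j
    have base : HasDerivWithinAt (fun s => ∑ k, X s i k * X s j k)
        (∑ k, ((F t * X t) i k * X t j k + X t i k * (F t * X t) j k)) I t :=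
      HasDerivWithinAt.fun_sum fun k _ => (hXdyn t ht i k).mul (hXdyn t ht j k)
    have hfun : ∀ s, (X s * (X s)ᵀ) i j = ∑ k, X s i k * X s j k := by
      intro s; simp [Matrix.mul_apply]
    have hval : (F t * (X t * (X t)ᵀ) + (X t * (X t)ᵀ) * (F t)ᵀ) i j
        = ∑ k, ((F t * X t) i k * X t j k + X t i k * (F t * X t) j k) := by
      have hre : F t * (X t * (X t)ᵀ) + (X t * (X t)ᵀ) * (F t)ᵀ
          = (F t * X t) * (X t)ᵀ + X t * (F t * X t)ᵀ := by
        rw [mul_assoc (X t), ← transpose_mul, ← mul_assoc]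
      rw [hre]
      simp [Matrix.add_apply, Matrix.mul_apply, Finset.sum_add_distrib, mul_comm]
    rw [hval]
    exact base.congr (fun s _ => hfun s) (hfun t)
  intro t1 ht1
  -- work on the compact interval between t0 and t1
  set a := min t0 t1 with ha_def
  set b := max t0 t1 with hb_def
  have hab : a ≤ b := min_le_max
  have haI : a ∈ I := by
    rcases min_cases t0 t1 with ⟨h, _⟩ | ⟨h, _⟩ <;> rw [ha_def, h] <;> assumption
  have hbI : b ∈ I := by
    rcases max_cases t0 t1 with ⟨h, _⟩ | ⟨h, _⟩ <;> rw [hb_def, h] <;> assumption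
  have hsub : Icc a b ⊆ I := hI.out haI hbI
  have hf' : ∀ s ∈ Icc a b, HasDerivWithinAt P (F s * P s + P s * (F s)ᵀ) (Icc a b) s := by
    intro s hs
    exact (hasDerivWithinAt_matrix (fun i j => hPdyn s (hsub hs) i j)).mono hsub
  have hg' : ∀ s ∈ Icc a b, HasDerivWithinAt (fun u => X u * (X u)ᵀ)
      (F s * (X s * (X s)ᵀ) + (X s * (X s)ᵀ) * (F s)ᵀ) (Icc a b) s := by
    intro s hs
    exact (hasDerivWithinAt_matrix (fun i j => hg_entry s (hsub hs) i j)).mono hsub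
  have ht0' : t0 ∈ Icc a b := ⟨min_le_left _ _, le_max_left _ _⟩
  have ht1' : t1 ∈ Icc a b := ⟨min_le_right _ _, le_max_right _ _⟩
  exact lyapunov_unique hab F (hF.mono hsub) P (fun u => X u * (X u)ᵀ) hf' hg' ht0' h0 ht1'
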